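/- For every n ≥ 1, the identity B_n^+(x) = (1−x)^n · Σ_{i≥0} ((2i+1)^n − (2i)^n) x^i holds in the ring of formal power series ℝ⟦x⟧; equivalently, B_n^+(x)/(1−x)^n = Σ_{i≥0} ((2i+1)^n − (2i)^n) x^i. -/

import Mathlib

open Polynomial Finset

/-- A signed permutation of `[n]`, encoded by its word: position `i` (0-indexed)
holds the pair (absolute value minus one, sign) of the letter `w(a_{i+1})`. -/
def IsSP {n : ℕ} (u : Fin n → Fin n × Bool) : Prop :=
  Function.Bijective fun i => (u i).1

instance {n : ℕ} (u : Fin n → Fin n × Bool) : Decidable (IsSP u) :=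
  inferInstanceAs (Decidable (Function.Bijective _))

/-- the letter `w(a_{i+1})` at position `i` of the word -/
def letterW {n : ℕ} (u : Fin n → Fin n × Bool) (i : Fin n) : ℤ :=
  if (u i).2 then ((u i).1 : ℤ) + 1 else -(((u i).1 : ℤ) + 1)

/-- `a_{k+1}`: the element of the domain `S` with absolute value `k+1` -/
def aVal {n : ℕ} (u : Fin n → Fin n × Bool) (k : Fin n) : ℤ :=
  if ∃ j, u j = (k, true) then ((k : ℤ) + 1) else -((k : ℤ) + 1)

/-- the number of type `B` excedances -/
def excB {n : ℕ} (u : Fin n → Fin n × Bool) : ℕ :=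
  (univ.filter fun k : Fin n =>
    aVal u k < letterW u k ∨ (aVal u k < 0 ∧ letterW u k = aVal u k)).card

/-- a derangement: no positive fixed point -/
def IsDerB {n : ℕ} (u : Fin n → Fin n × Bool) : Prop :=
  ∀ k : Fin n, 0 < aVal u k → letterW u k ≠ aVal u k

instance {n : ℕ} (u : Fin n → Fin n × Bool) : Decidable (IsDerB u) := by
  unfold IsDerB; infer_instance

/-- the type `B` derangement polynomial -/
noncomputable def dB (n : ℕ) : Polynomial ℝ :=
  ∑ u ∈ univ.filter (fun u : Fin n → Fin n × Bool => IsSP u ∧ IsDerB u), X ^ excB u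

/-- the number of type `B` descents -/
def desB {n : ℕ} (u : Fin n → Fin n × Bool) : ℕ :=
  (univ.filter fun i : Fin n =>
    ((i : ℕ) = 0 ∧ letterW u i < 0) ∨
    (0 < (i : ℕ) ∧ letterW u i < letterW u ⟨(i : ℕ) - 1, by have := i.isLt; omega⟩)).card

/-- the type `B` Eulerian polynomial -/
noncomputable def Bpoly (n : ℕ) : Polynomial ℝ :=
  ∑ u ∈ univ.filter (fun u : Fin n → Fin n × Bool => IsSP u), X ^ desB u

/-- the "positive half" type `B` Eulerian polynomial -/
noncomputable def Bplus : ℕ → Polynomial ℝ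
  | 0 => 1
  | n + 1 =>
    ∑ u ∈ univ.filter (fun u : Fin (n + 1) → Fin (n + 1) × Bool =>
        IsSP u ∧ 0 < letterW u (Fin.last n)), X ^ desB u

/-- the "negative half" type `B` Eulerian polynomial -/
noncomputable def Bminus : ℕ → Polynomial ℝ
  | 0 => 0
  | n + 1 =>
    ∑ u ∈ univ.filter (fun u : Fin (n + 1) → Fin (n + 1) × Bool =>
        IsSP u ∧ letterW u (Fin.last n) < 0), X ^ desB u

/-- the number of excedances of a permutation -/
def excA {n : ℕ} (w : Equiv.Perm (Fin n)) : ℕ :=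
  (univ.filter fun i : Fin n => i < w i).card

/-- the number of descents of a permutation -/
def desA {n : ℕ} (w : Equiv.Perm (Fin n)) : ℕ :=
  (univ.filter fun i : Fin n =>
    (i : ℕ) + 1 < n ∧ w ⟨((i : ℕ) + 1) % n, Nat.mod_lt _ i.pos⟩ < w i).card

/-- the (type `A`) derangement polynomial -/
noncomputable def dA (n : ℕ) : Polynomial ℝ :=
  ∑ w ∈ univ.filter (fun w : Equiv.Perm (Fin n) => ∀ i, w i ≠ i), X ^ excA w

/-- the Eulerian polynomial, with the convention `A_0 = 0` -/
noncomputable def Apoly (n : ℕ) : Polynomial ℝ :=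
  if n = 0 then 0 else ∑ w : Equiv.Perm (Fin n), X ^ desA w

namespace BAux

/-- numeric letter function -/
def ltr {m : ℕ} (u : Fin m → Fin m × Bool) (k : ℕ) : ℤ :=
  if h : k < m then letterW u ⟨k, h⟩ else 0

/-- numeric descent predicate -/
def nDes {m : ℕ} (u : Fin m → Fin m × Bool) (k : ℕ) : Prop :=
  (k = 0 ∧ ltr u 0 < 0) ∨ (0 < k ∧ k < m ∧ ltr u k < ltr u (k - 1))

instance {m : ℕ} (u : Fin m → Fin m × Bool) (k : ℕ) : Decidable (nDes u k) := by
  unfold nDes; infer_instance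

lemma ltr_lb {m : ℕ} (u : Fin m → Fin m × Bool) (k : ℕ) : -(m : ℤ) ≤ ltr u k := by
  unfold ltr; split
  · unfold letterW
    split <;> [skip; skip] <;>
      · have := (u ⟨k, by assumption⟩).1.isLt

        omega
  · omega

lemma ltr_ub {m : ℕ} (u : Fin m → Fin m × Bool) (k : ℕ) : ltr u k ≤ (m : ℤ) := by
  unfold ltr; split
  · unfold letterW
    split <;> [skip; skip] <;>
      · have := (u ⟨k, by assumption⟩).1.isLt

        omega
  · omega

lemma desB_eq {m : ℕ} (u : Fin m → Fin m × Bool) :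
    desB u = ∑ i : Fin m, ite (nDes u (i : ℕ)) 1 0 := by
  rw [desB, Finset.card_filter]
  refine Finset.sum_congr rfl fun i _ => if_congr ?_ rfl rfl
  unfold nDes ltr
  have hi := i.isLt
  constructor
  · rintro (⟨h0, hl⟩ | ⟨h0, hl⟩)
    · exact Or.inl ⟨h0, by rw [dif_pos (by omega)]; convert hl using 2; exact Fin.ext (by simp [h0])⟩
    · refine Or.inr ⟨h0, hi, ?_⟩
      rw [dif_pos hi, dif_pos (by omega)]
      convert hl using 2
  · rintro (⟨h0, hl⟩ | ⟨h0, _, hl⟩)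
    · refine Or.inl ⟨h0, ?_⟩
      rw [dif_pos (by omega)] at hl
      convert hl using 2
      exact Fin.ext (by simp [h0])
    · refine Or.inr ⟨h0, ?_⟩
      rw [dif_pos hi, dif_pos (by omega)] at hl
      convert hl using 2

def lift {m : ℕ} (a : Fin m × Bool) : Fin (m + 1) × Bool := (a.1.castSucc, a.2)

def ins {m : ℕ} (v : Fin m → Fin m × Bool) (p : Fin (m + 1)) (ε : Bool)
    (i : Fin (m + 1)) : Fin (m + 1) × Bool :=
  if h : (i : ℕ) < (p : ℕ) then lift (v ⟨i, by have := p.isLt; omega⟩)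
  else if h2 : (i : ℕ) = (p : ℕ) then (Fin.last m, ε)
  else lift (v ⟨(i : ℕ) - 1, by have := i.isLt; omega⟩)

lemma ins_self {m : ℕ} (v : Fin m → Fin m × Bool) (p : Fin (m + 1)) (ε : Bool) :
    ins v p ε p = (Fin.last m, ε) := by
  unfold ins; rw [dif_neg (by omega), dif_pos rfl]

lemma ltr_ins_lt {m : ℕ} (v : Fin m → Fin m × Bool) (p : Fin (m + 1)) (ε : Bool)
    {k : ℕ} (h : k < (p : ℕ)) : ltr (ins v p ε) k = ltr v k := by
  have hp := p.isLt
  unfold ltr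
  rw [dif_pos (by omega), dif_pos (by omega)]
  unfold letterW ins
  rw [dif_pos (by simpa using h)]
  rfl

lemma ltr_ins_self {m : ℕ} (v : Fin m → Fin m × Bool) (p : Fin (m + 1)) (ε : Bool) :
    ltr (ins v p ε) (p : ℕ) = if ε then ((m : ℤ) + 1) else -((m : ℤ) + 1) := by
  have hp := p.isLt
  unfold ltr
  rw [dif_pos (by omega)]
  have : (⟨(p : ℕ), by omega⟩ : Fin (m + 1)) = p := Fin.ext rfl
  rw [this]
  unfold letterW
  rw [ins_self]
  cases ε <;> simp [Fin.last]

lemma ltr_ins_gt {m : ℕ} (v : Fin m → Fin m × Bool) (p : Fin (m + 1)) (ε : Bool)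
    {k : ℕ} (h : (p : ℕ) < k) (h2 : k < m + 1) : ltr (ins v p ε) k = ltr v (k - 1) := by
  unfold ltr
  rw [dif_pos (by omega), dif_pos (by omega)]
  unfold letterW ins
  rw [dif_neg (by simp; omega), dif_neg (by simp; omega)]
  rfl

lemma nDes_ins {m : ℕ} (v : Fin m → Fin m × Bool) (p : Fin (m + 1)) (ε : Bool)
    (k : ℕ) (hk : k < m + 1) :
    nDes (ins v p ε) k ↔
      if k < (p : ℕ) then nDes v k
      else if k = (p : ℕ) then ε = false
      else if k = (p : ℕ) + 1 then ε = true
      else nDes v (k - 1) := by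
  have hp := p.isLt
  have hub := fun j => ltr_ub v j
  have hlb := fun j => ltr_lb v j
  rcases lt_trichotomy k (p : ℕ) with hc | hc | hc
  · rw [if_pos hc]
    unfold nDes
    rw [ltr_ins_lt v p ε (by omega : (0:ℕ) < (p:ℕ)), ltr_ins_lt v p ε hc,
      ltr_ins_lt v p ε (by omega : k - 1 < (p : ℕ))]
    constructor
    · rintro (⟨h0, hl⟩ | ⟨h0, _, hl⟩)
      · exact Or.inl ⟨h0, hl⟩
      · exact Or.inr ⟨h0, by omega, hl⟩
    · rintro (⟨h0, hl⟩ | ⟨h0, _, hl⟩)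
      · exact Or.inl ⟨h0, hl⟩
      · exact Or.inr ⟨h0, by omega, hl⟩
  · rw [if_neg (by omega), if_pos hc]
    subst hc
    unfold nDes
    rcases Nat.eq_zero_or_pos (p : ℕ) with h0 | h0
    · have h1 : ltr (ins v p ε) 0 = if ε then ((m:ℤ)+1) else -((m:ℤ)+1) := by
        rw [← h0]; exact ltr_ins_self v p ε
      rw [h0, h1]
      cases ε <;> simp <;> omega
    · rw [ltr_ins_self, ltr_ins_lt v p ε (k := 0) h0,
        ltr_ins_lt v p ε (k := (p:ℕ) - 1) (by omega)]
      have := hub ((p : ℕ) - 1)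
      have := hlb ((p : ℕ) - 1)
      cases ε <;> simp <;> simp only [Fin.ext_iff, Fin.lt_def, Fin.val_zero] <;> omega
  · rw [if_neg (by omega), if_neg (by omega)]
    rcases eq_or_ne k ((p : ℕ) + 1) with hc2 | hc2
    · rw [if_pos hc2]
      subst hc2
      unfold nDes
      rw [ltr_ins_gt v p ε (by omega) hk]
      simp only [Nat.add_sub_cancel]
      rw [ltr_ins_self]
      have := hub (p : ℕ)
      have := hlb (p : ℕ)
      cases ε <;> simp <;> omega
    · rw [if_neg hc2]
      unfold nDes
      rw [ltr_ins_gt v p ε hc hk, ltr_ins_gt v p ε (k := k - 1) (by omega) (by omega)]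
      constructor
      · rintro (⟨h0, _⟩ | ⟨h0, _, hl⟩)
        · omega
        · exact Or.inr ⟨by omega, by omega, hl⟩
      · rintro (⟨h0, _⟩ | ⟨h0, h1, hl⟩)
        · omega
        · exact Or.inr ⟨by omega, by omega, hl⟩

lemma val_succAbove {m : ℕ} (p : Fin (m + 1)) (j : Fin m) :
    ((p.succAbove j : Fin (m + 1)) : ℕ) = if (j : ℕ) < (p : ℕ) then (j : ℕ) else (j : ℕ) + 1 := by
  rw [Fin.succAbove]
  split_ifs with h1 h2 h2 <;> simp_all [Fin.lt_def]

lemma ins_succAbove {m : ℕ} (v : Fin m → Fin m × Bool) (p : Fin (m + 1)) (ε : Bool)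
    (j : Fin m) : ins v p ε (p.succAbove j) = lift (v j) := by
  have hv := val_succAbove p j
  unfold ins
  split_ifs at hv with h
  · rw [dif_pos (by omega)]
    congr 2
    exact Fin.ext (by simp only [Fin.val_mk]; omega)
  · have hj := j.isLt
    rw [dif_neg (by omega), dif_neg (by omega)]
    congr 2
    exact Fin.ext (by simp only [Fin.val_mk]; omega)

lemma desB_ins {m : ℕ} (v : Fin m → Fin m × Bool) (p : Fin (m + 1)) (ε : Bool) :
    desB (ins v p ε) =
      if h : (p : ℕ) < m then (if nDes v (p : ℕ) then desB v else desB v + 1)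
      else (desB v + if ε then 0 else 1) := by
  have hp := p.isLt
  rw [desB_eq, Fin.sum_univ_succAbove (fun i => ite (nDes (ins v p ε) (i : ℕ)) 1 0) p]
  have h1 : nDes (ins v p ε) ((p : Fin (m + 1)) : ℕ) ↔ ε = false := by
    rw [nDes_ins v p ε ((p : Fin (m + 1)) : ℕ) (by omega), if_neg (lt_irrefl _), if_pos rfl]
  have hself : (ite (nDes (ins v p ε) ((p : Fin (m + 1)) : ℕ)) 1 0 : ℕ) = if ε then 0 else 1 := by
    rw [if_congr h1 rfl rfl]
    cases ε <;> simp
  have hterm : ∀ j : Fin m, (ite (nDes (ins v p ε) ((p.succAbove j : Fin (m + 1)) : ℕ)) 1 0 : ℕ)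
      = if (j : ℕ) = (p : ℕ) then (if ε then 1 else 0) else ite (nDes v (j : ℕ)) 1 0 := by
    intro j
    have hj := j.isLt
    have hv := val_succAbove p j
    split_ifs at hv with h
    · have h2 : nDes (ins v p ε) ((p.succAbove j : Fin (m + 1)) : ℕ) ↔ nDes v (j : ℕ) := by
        rw [hv, nDes_ins v p ε (j : ℕ) (by omega), if_pos h]
      rw [if_congr h2 rfl rfl, if_neg (show ¬((j : ℕ) = (p : ℕ)) by omega)]
    · rcases eq_or_ne (j : ℕ) (p : ℕ) with he | he
      · have h2 : nDes (ins v p ε) ((p.succAbove j : Fin (m + 1)) : ℕ) ↔ ε = true := by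
          rw [hv, nDes_ins v p ε ((j : ℕ) + 1) (by omega), if_neg (by omega), if_neg (by omega),
            if_pos (by omega)]
        rw [if_congr h2 rfl rfl, if_pos he]
      · have h2 : nDes (ins v p ε) ((p.succAbove j : Fin (m + 1)) : ℕ) ↔ nDes v (j : ℕ) := by
          rw [hv, nDes_ins v p ε ((j : ℕ) + 1) (by omega), if_neg (by omega), if_neg (by omega),
            if_neg (by omega)]
          simp only [Nat.add_sub_cancel]
        rw [if_congr h2 rfl rfl, if_neg he]
  rw [hself, Finset.sum_congr rfl (fun j _ => hterm j)]
  by_cases h : (p : ℕ) < m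
  · set p' : Fin m := ⟨(p : ℕ), h⟩ with hp'
    have hs : ∑ j : Fin m, (if (j : ℕ) = (p : ℕ) then (if ε then 1 else 0)
        else ite (nDes v (j : ℕ)) 1 0 : ℕ)
        = (if ε then 1 else 0) + ∑ j ∈ univ.erase p', ite (nDes v (j : ℕ)) 1 0 := by
      rw [← Finset.add_sum_erase _ _ (mem_univ p')]
      congr 1
      · rw [if_pos rfl]
      · refine Finset.sum_congr rfl fun j hj => ?_
        rw [if_neg ?_]
        intro hc
        exact (Finset.mem_erase.mp hj).1 (Fin.ext hc)
    have hd : desB v = ite (nDes v ((p' : Fin m) : ℕ)) 1 0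
        + ∑ j ∈ univ.erase p', ite (nDes v (j : ℕ)) 1 0 := by
      rw [desB_eq, ← Finset.add_sum_erase _ _ (mem_univ p')]
    rw [hs, dif_pos h]
    have he : ((p' : Fin m) : ℕ) = (p : ℕ) := rfl
    rw [he] at hd
    split_ifs at hd ⊢ <;> omega
  · rw [dif_neg h]
    have hz : ∀ j : Fin m, (if (j : ℕ) = (p : ℕ) then (if ε then 1 else 0)
        else ite (nDes v (j : ℕ)) 1 0 : ℕ) = ite (nDes v (j : ℕ)) 1 0 := by
      intro j
      rw [if_neg (by have := j.isLt; omega)]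
    rw [Finset.sum_congr rfl (fun j _ => hz j), ← desB_eq]
    cases ε <;> simp <;> omega

lemma isSP_ins {m : ℕ} (v : Fin m → Fin m × Bool) (p : Fin (m + 1)) (ε : Bool) :
    IsSP (ins v p ε) ↔ IsSP v := by
  constructor
  · intro h
    refine Finite.injective_iff_bijective.mp ?_
    intro j j' hjj
    have e1 : (ins v p ε (p.succAbove j)).1 = (v j).1.castSucc := by rw [ins_succAbove]; rfl
    have e2 : (ins v p ε (p.succAbove j')).1 = (v j').1.castSucc := by rw [ins_succAbove]; rfl
    have hs : p.succAbove j = p.succAbove j' := by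
      apply h.injective
      exact e1.trans ((congrArg Fin.castSucc hjj).trans e2.symm)
    exact Fin.succAbove_right_injective hs
  · intro h
    refine Finite.injective_iff_bijective.mp ?_
    intro i i' hii
    have hii' : (ins v p ε i).1 = (ins v p ε i').1 := hii
    rcases eq_or_ne i p with h1 | h1 <;> rcases eq_or_ne i' p with h2 | h2
    · rw [h1, h2]
    · exfalso
      obtain ⟨j, hj⟩ := Fin.exists_succAbove_eq h2
      have e1 : (ins v p ε i).1 = Fin.last m := by rw [h1, ins_self]
      have e2 : (ins v p ε i').1 = (v j).1.castSucc := by rw [← hj, ins_succAbove]; rfl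
      have h3 := (v j).1.isLt
      have h4 := congrArg Fin.val (e1.symm.trans (hii'.trans e2))
      simp only [Fin.val_last, Fin.coe_castSucc] at h4
      omega
    · exfalso
      obtain ⟨j, hj⟩ := Fin.exists_succAbove_eq h1
      have e1 : (ins v p ε i').1 = Fin.last m := by rw [h2, ins_self]
      have e2 : (ins v p ε i).1 = (v j).1.castSucc := by rw [← hj, ins_succAbove]; rfl
      have h3 := (v j).1.isLt
      have h4 := congrArg Fin.val (e1.symm.trans (hii'.symm.trans e2))
      simp only [Fin.val_last, Fin.coe_castSucc] at h4
      omega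
    · obtain ⟨j, hj⟩ := Fin.exists_succAbove_eq h1
      obtain ⟨j', hj'⟩ := Fin.exists_succAbove_eq h2
      have e1 : (ins v p ε i).1 = (v j).1.castSucc := by rw [← hj, ins_succAbove]; rfl
      have e2 : (ins v p ε i').1 = (v j').1.castSucc := by rw [← hj', ins_succAbove]; rfl
      have h5 : (v j).1 = (v j').1 := Fin.castSucc_injective _ (e1.symm.trans (hii'.trans e2))
      have h6 := h.injective h5
      rw [← hj, ← hj', h6]

noncomputable def pos {m : ℕ} (u : Fin (m + 1) → Fin (m + 1) × Bool) : Fin (m + 1) :=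
  if h : ∃ i, (u i).1 = Fin.last m then h.choose else 0

lemma pos_spec {m : ℕ} {u : Fin (m + 1) → Fin (m + 1) × Bool} (hu : IsSP u) :
    (u (pos u)).1 = Fin.last m := by
  have h : ∃ i, (u i).1 = Fin.last m := hu.surjective (Fin.last m)
  rw [pos, dif_pos h]
  exact h.choose_spec

noncomputable def rem {m : ℕ} (u : Fin (m + 1) → Fin (m + 1) × Bool) (p : Fin (m + 1)) :
    Fin m → Fin m × Bool :=
  fun j => (⟨min ((u (p.succAbove j)).1 : ℕ) (m - 1), by have := j.isLt; omega⟩,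
    (u (p.succAbove j)).2)

lemma rem_ins {m : ℕ} (v : Fin m → Fin m × Bool) (p : Fin (m + 1)) (ε : Bool) :
    rem (ins v p ε) p = v := by
  funext j
  have h := ins_succAbove v p ε j
  have h2 := (v j).1.isLt
  have hval : ((ins v p ε (p.succAbove j)).1 : ℕ) = ((v j).1 : ℕ) := by rw [h]; rfl
  have hsnd : (ins v p ε (p.succAbove j)).2 = (v j).2 := by rw [h]; rfl
  refine Prod.ext (Fin.ext ?_) ?_
  · show min ((ins v p ε (p.succAbove j)).1 : ℕ) (m - 1) = ((v j).1 : ℕ)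
    rw [hval]
    omega
  · exact hsnd

lemma pos_ins {m : ℕ} (v : Fin m → Fin m × Bool) (p : Fin (m + 1)) (ε : Bool) :
    pos (ins v p ε) = p := by
  have hex : ∃ i, (ins v p ε i).1 = Fin.last m := ⟨p, by rw [ins_self]⟩
  rw [pos, dif_pos hex]
  by_contra hne
  obtain ⟨j, hj⟩ := Fin.exists_succAbove_eq hne
  have hspec := hex.choose_spec
  rw [← hj, ins_succAbove] at hspec
  have h2 := (v j).1.isLt
  have h3 := congrArg Fin.val hspec
  simp only [lift, Fin.coe_castSucc, Fin.val_last] at h3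
  omega

lemma ins_rem {m : ℕ} {u : Fin (m + 1) → Fin (m + 1) × Bool} (hu : IsSP u) :
    ins (rem u (pos u)) (pos u) ((u (pos u)).2) = u := by
  funext i
  rcases eq_or_ne i (pos u) with he | hi
  · rw [he, ins_self]
    exact Prod.ext (pos_spec hu).symm rfl
  · obtain ⟨j, hj⟩ := Fin.exists_succAbove_eq hi
    rw [← hj, ins_succAbove]
    have hlt : ((u ((pos u).succAbove j)).1 : ℕ) < m := by
      have h1 : (u ((pos u).succAbove j)).1 ≠ Fin.last m := by
        intro hcontra
        have h5 : (pos u).succAbove j = pos u := by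
          apply hu.injective
          show (u ((pos u).succAbove j)).1 = (u (pos u)).1
          rw [hcontra, pos_spec hu]
        exact (Fin.succAbove_ne (pos u) j) h5
      have h3 := (u ((pos u).succAbove j)).1.isLt
      have hv : ((u ((pos u).succAbove j)).1 : ℕ) ≠ m := fun hh =>
        h1 (Fin.ext (by simp [Fin.val_last, hh]))
      omega
    refine Prod.ext (Fin.ext ?_) rfl
    show min ((u ((pos u).succAbove j)).1 : ℕ) (m - 1) = ((u ((pos u).succAbove j)).1 : ℕ)
    omega

lemma sum_reindex {n : ℕ} (P : (Fin (n + 2) → Fin (n + 2) × Bool) → Prop) [DecidablePred P] :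
    ∑ u ∈ univ.filter (fun u : Fin (n + 2) → Fin (n + 2) × Bool => IsSP u ∧ P u),
        (X : ℝ[X]) ^ desB u
      = ∑ t ∈ univ.filter (fun t : (Fin (n + 1) → Fin (n + 1) × Bool) × Fin (n + 2) × Bool =>
          IsSP t.1 ∧ P (ins t.1 t.2.1 t.2.2)), X ^ desB (ins t.1 t.2.1 t.2.2) := by
  refine Finset.sum_bij' (i := fun u _ => (rem u (pos u), pos u, (u (pos u)).2))
    (j := fun t _ => ins t.1 t.2.1 t.2.2) ?_ ?_ ?_ ?_ ?_
  · intro u hu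
    rw [Finset.mem_filter] at hu ⊢
    obtain ⟨-, hSP, hP⟩ := hu
    have he := ins_rem hSP
    refine ⟨mem_univ _, ?_, ?_⟩
    · rw [← isSP_ins (rem u (pos u)) (pos u) ((u (pos u)).2), he]; exact hSP
    · show P (ins (rem u (pos u)) (pos u) ((u (pos u)).2))
      rw [he]; exact hP
  · intro t ht
    rw [Finset.mem_filter] at ht ⊢
    obtain ⟨-, hSP, hP⟩ := ht
    exact ⟨mem_univ _, (isSP_ins _ _ _).mpr hSP, hP⟩
  · intro u hu
    rw [Finset.mem_filter] at hu
    exact ins_rem hu.2.1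
  · intro t ht
    show (rem (ins t.1 t.2.1 t.2.2) (pos (ins t.1 t.2.1 t.2.2)), pos (ins t.1 t.2.1 t.2.2),
      (ins t.1 t.2.1 t.2.2 (pos (ins t.1 t.2.1 t.2.2))).2) = t
    rw [pos_ins, rem_ins, ins_self]
  · intro u hu
    rw [Finset.mem_filter] at hu
    rw [ins_rem hu.2.1]

lemma letterW_last_eq_ltr {m : ℕ} (u : Fin (m + 1) → Fin (m + 1) × Bool) :
    letterW u (Fin.last m) = ltr u m := by
  unfold ltr
  rw [dif_pos (by omega)]
  rfl

lemma mono_op {n d : ℕ} :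
    (X : ℝ[X]) * (1 - X) * derivative ((X : ℝ[X]) ^ d) + ((n : ℝ[X]) + 1) * (X * X ^ d)
      = (n + 1) • X ^ (d + 1) + d • (X ^ d - X ^ (d + 1)) := by
  rw [derivative_X_pow]
  cases d with
  | zero => simp
  | succ k =>
    simp only [Nat.add_sub_cancel, nsmul_eq_mul]
    push_cast
    simp only [map_add, map_one, map_natCast]
    ring

lemma sq_eq {m : ℕ} (v : Fin m → Fin m × Bool) :
    (∑ q : Fin m, (X : ℝ[X]) ^ (if nDes v (q : ℕ) then desB v else desB v + 1))
      = m • X ^ (desB v + 1) + desB v • (X ^ desB v - X ^ (desB v + 1)) := by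
  have h1 : ∀ q : Fin m, (X : ℝ[X]) ^ (if nDes v (q : ℕ) then desB v else desB v + 1)
      = X ^ (desB v + 1) + (ite (nDes v (q : ℕ)) 1 0 : ℕ) • (X ^ desB v - X ^ (desB v + 1)) := by
    intro q
    by_cases h : nDes v (q : ℕ) <;> simp [h]
  rw [Finset.sum_congr rfl (fun q _ => h1 q), Finset.sum_add_distrib]
  congr 1
  · rw [Finset.sum_const, Finset.card_univ, Fintype.card_fin]
  · rw [← Finset.sum_smul, ← desB_eq]

lemma summand_plus {n : ℕ} (v : Fin (n + 1) → Fin (n + 1) × Bool) (p : Fin (n + 2)) (ε : Bool) :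
    (if IsSP v ∧ 0 < letterW (ins v p ε) (Fin.last (n + 1))
        then (X : ℝ[X]) ^ desB (ins v p ε) else 0)
      = if h : (p : ℕ) < n + 1
          then (if IsSP v ∧ 0 < letterW v (Fin.last n)
            then X ^ (if nDes v (p : ℕ) then desB v else desB v + 1) else 0)
          else (if ε then (if IsSP v then X ^ desB v else 0) else 0) := by
  rw [letterW_last_eq_ltr]
  by_cases hp : (p : ℕ) < n + 1
  · rw [dif_pos hp]
    have hl : ltr (ins v p ε) (n + 1) = letterW v (Fin.last n) := by
      rw [ltr_ins_gt v p ε hp (by omega)]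
      simp only [Nat.add_sub_cancel]
      rw [letterW_last_eq_ltr]
    have hd : desB (ins v p ε) = if nDes v (p : ℕ) then desB v else desB v + 1 := by
      rw [desB_ins, dif_pos hp]
    rw [hl, hd]
  · rw [dif_neg hp]
    have hp2 : (p : ℕ) = n + 1 := by have := p.isLt; omega
    have hl : ltr (ins v p ε) (n + 1) = if ε then ((n : ℤ) + 1 + 1) else -((n : ℤ) + 1 + 1) := by
      have h := ltr_ins_self v p ε
      rw [hp2] at h
      rw [h]
      push_cast
      rfl
    have hd : desB (ins v p ε) = desB v + if ε then 0 else 1 := by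
      rw [desB_ins, dif_neg (by omega)]
    cases ε
    · have hl2 : ltr (ins v p false) (n + 1) = -((n : ℤ) + 1 + 1) := by simpa using hl
      have hcond : ¬(IsSP v ∧ 0 < -((n : ℤ) + 1 + 1)) := by rintro ⟨-, hc⟩; omega
      simp only [hl2]
      rw [if_neg hcond]
      simp
    · have hl2 : ltr (ins v p true) (n + 1) = (n : ℤ) + 1 + 1 := by simpa using hl
      have hd2 : desB (ins v p true) = desB v := by simpa using hd
      have hpos : (0 : ℤ) < (n : ℤ) + 1 + 1 := by positivity
      simp [hl2, hd2, hpos]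

lemma Bplus_rec (n : ℕ) :
    Bplus (n + 2) = Bpoly (n + 1)
      + 2 * (X * (1 - X) * derivative (Bplus (n + 1))
        + ((n : ℝ[X]) + 1) * (X * Bplus (n + 1))) := by
  classical
  have e0 : Bplus (n + 2) = ∑ u ∈ univ.filter (fun u : Fin (n + 2) → Fin (n + 2) × Bool =>
      IsSP u ∧ 0 < letterW u (Fin.last (n + 1))), X ^ desB u := rfl
  rw [e0, sum_reindex (fun u => 0 < letterW u (Fin.last (n + 1))), Finset.sum_filter,
    Fintype.sum_prod_type]
  have e1 : ∀ v : Fin (n + 1) → Fin (n + 1) × Bool,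
      (∑ q : Fin (n + 2) × Bool, if IsSP v ∧ 0 < letterW (ins v q.1 q.2) (Fin.last (n + 1))
          then (X : ℝ[X]) ^ desB (ins v q.1 q.2) else 0)
      = (if IsSP v then X ^ desB v else 0)
        + (if IsSP v ∧ 0 < letterW v (Fin.last n)
            then 2 * ((n + 1) • X ^ (desB v + 1) + desB v • (X ^ desB v - X ^ (desB v + 1)))
            else 0) := by
    intro v
    rw [Fintype.sum_prod_type]
    rw [Finset.sum_congr rfl (fun p _ => Finset.sum_congr rfl
      (fun ε _ => summand_plus v p ε))]
    rw [Fin.sum_univ_castSucc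
      (f := fun p => ∑ ε : Bool, if h : (p : ℕ) < n + 1
          then (if IsSP v ∧ 0 < letterW v (Fin.last n)
            then (X:ℝ[X]) ^ (if nDes v (p : ℕ) then desB v else desB v + 1) else 0)
          else (if ε then (if IsSP v then X ^ desB v else 0) else 0))]
    rw [add_comm]
    congr 1
    · -- last term
      rw [Fintype.sum_bool]
      rw [dif_neg (by simp [Fin.last]), dif_neg (by simp [Fin.last])]
      simp
    · -- castSucc part
      have e2 : ∀ q : Fin (n + 1),
          (∑ ε : Bool, if h : ((q.castSucc : Fin (n + 2)) : ℕ) < n + 1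
            then (if IsSP v ∧ 0 < letterW v (Fin.last n)
              then (X:ℝ[X]) ^ (if nDes v ((q.castSucc : Fin (n + 2)) : ℕ) then desB v
                else desB v + 1) else 0)
            else (if ε then (if IsSP v then X ^ desB v else 0) else 0))
          = 2 * (if IsSP v ∧ 0 < letterW v (Fin.last n)
              then (X:ℝ[X]) ^ (if nDes v (q : ℕ) then desB v else desB v + 1) else 0) := by
        intro q
        have hq : ((q.castSucc : Fin (n + 2)) : ℕ) = (q : ℕ) := rfl
        rw [Fintype.sum_bool]
        rw [dif_pos (by rw [hq]; exact q.isLt), dif_pos (by rw [hq]; exact q.isLt), hq]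
        ring
      rw [Finset.sum_congr rfl (fun q _ => e2 q), ← Finset.mul_sum]
      by_cases hv : IsSP v ∧ 0 < letterW v (Fin.last n)
      · rw [if_pos hv, Finset.sum_congr rfl (fun q _ => by rw [if_pos hv]), sq_eq]
      · rw [if_neg hv, Finset.sum_congr rfl (fun q _ => by rw [if_neg hv])]
        simp
  rw [Finset.sum_congr rfl (fun v _ => e1 v), Finset.sum_add_distrib]
  congr 1
  · rw [Bpoly, Finset.sum_filter]
  · have e3 : Bplus (n + 1) = ∑ u ∈ univ.filter (fun u : Fin (n + 1) → Fin (n + 1) × Bool =>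
        IsSP u ∧ 0 < letterW u (Fin.last n)), X ^ desB u := rfl
    rw [e3, Finset.mul_sum, derivative_sum, Finset.mul_sum, Finset.mul_sum,
      ← Finset.sum_add_distrib, Finset.mul_sum, ← Finset.sum_filter]
    refine Finset.sum_congr rfl fun v _ => ?_
    rw [mono_op]

lemma letter_ne_zero {m : ℕ} (u : Fin m → Fin m × Bool) (i : Fin m) : letterW u i ≠ 0 := by
  unfold letterW
  split <;> omega

lemma summand_minus {n : ℕ} (v : Fin (n + 1) → Fin (n + 1) × Bool) (p : Fin (n + 2)) (ε : Bool) :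
    (if IsSP v ∧ letterW (ins v p ε) (Fin.last (n + 1)) < 0
        then (X : ℝ[X]) ^ desB (ins v p ε) else 0)
      = if h : (p : ℕ) < n + 1
          then (if IsSP v ∧ letterW v (Fin.last n) < 0
            then X ^ (if nDes v (p : ℕ) then desB v else desB v + 1) else 0)
          else (if ε then 0 else (if IsSP v then X ^ (desB v + 1) else 0)) := by
  rw [letterW_last_eq_ltr]
  by_cases hp : (p : ℕ) < n + 1
  · rw [dif_pos hp]
    have hl : ltr (ins v p ε) (n + 1) = letterW v (Fin.last n) := by
      rw [ltr_ins_gt v p ε hp (by omega)]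
      simp only [Nat.add_sub_cancel]
      rw [letterW_last_eq_ltr]
    have hd : desB (ins v p ε) = if nDes v (p : ℕ) then desB v else desB v + 1 := by
      rw [desB_ins, dif_pos hp]
    rw [hl, hd]
  · rw [dif_neg hp]
    have hp2 : (p : ℕ) = n + 1 := by have := p.isLt; omega
    have hl : ltr (ins v p ε) (n + 1) = if ε then ((n : ℤ) + 1 + 1) else -((n : ℤ) + 1 + 1) := by
      have h := ltr_ins_self v p ε
      rw [hp2] at h
      rw [h]
      push_cast
      rfl
    have hd : desB (ins v p ε) = desB v + if ε then 0 else 1 := by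
      rw [desB_ins, dif_neg (by omega)]
    cases ε
    · have hl2 : ltr (ins v p false) (n + 1) = -((n : ℤ) + 1 + 1) := by simpa using hl
      have hd2 : desB (ins v p false) = desB v + 1 := by simpa using hd
      have hneg : -((n : ℤ) + 1 + 1) < 0 := by omega
      simp [hl2, hd2, hneg, show (-1 : ℤ) < 1 + (n : ℤ) by omega]
    · have hl2 : ltr (ins v p true) (n + 1) = (n : ℤ) + 1 + 1 := by simpa using hl
      have hcond : ¬(IsSP v ∧ ((n : ℤ) + 1 + 1) < 0) := by rintro ⟨-, hc⟩; omega
      simp only [hl2]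
      rw [if_neg hcond]
      simp

lemma Bminus_rec (n : ℕ) :
    Bminus (n + 2) = X * Bpoly (n + 1)
      + 2 * (X * (1 - X) * derivative (Bminus (n + 1))
        + ((n : ℝ[X]) + 1) * (X * Bminus (n + 1))) := by
  classical
  have e0 : Bminus (n + 2) = ∑ u ∈ univ.filter (fun u : Fin (n + 2) → Fin (n + 2) × Bool =>
      IsSP u ∧ letterW u (Fin.last (n + 1)) < 0), X ^ desB u := rfl
  rw [e0, sum_reindex (fun u => letterW u (Fin.last (n + 1)) < 0), Finset.sum_filter,
    Fintype.sum_prod_type]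
  have e1 : ∀ v : Fin (n + 1) → Fin (n + 1) × Bool,
      (∑ q : Fin (n + 2) × Bool, if IsSP v ∧ letterW (ins v q.1 q.2) (Fin.last (n + 1)) < 0
          then (X : ℝ[X]) ^ desB (ins v q.1 q.2) else 0)
      = (if IsSP v then X ^ (desB v + 1) else 0)
        + (if IsSP v ∧ letterW v (Fin.last n) < 0
            then 2 * ((n + 1) • X ^ (desB v + 1) + desB v • (X ^ desB v - X ^ (desB v + 1)))
            else 0) := by
    intro v
    rw [Fintype.sum_prod_type]
    rw [Finset.sum_congr rfl (fun p _ => Finset.sum_congr rfl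
      (fun ε _ => summand_minus v p ε))]
    rw [Fin.sum_univ_castSucc
      (f := fun p => ∑ ε : Bool, if h : (p : ℕ) < n + 1
          then (if IsSP v ∧ letterW v (Fin.last n) < 0
            then (X:ℝ[X]) ^ (if nDes v (p : ℕ) then desB v else desB v + 1) else 0)
          else (if ε then 0 else (if IsSP v then X ^ (desB v + 1) else 0)))]
    rw [add_comm]
    congr 1
    · rw [Fintype.sum_bool]
      rw [dif_neg (by simp [Fin.last]), dif_neg (by simp [Fin.last])]
      simp
    · have e2 : ∀ q : Fin (n + 1),
          (∑ ε : Bool, if h : ((q.castSucc : Fin (n + 2)) : ℕ) < n + 1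
            then (if IsSP v ∧ letterW v (Fin.last n) < 0
              then (X:ℝ[X]) ^ (if nDes v ((q.castSucc : Fin (n + 2)) : ℕ) then desB v
                else desB v + 1) else 0)
            else (if ε then 0 else (if IsSP v then X ^ (desB v + 1) else 0)))
          = 2 * (if IsSP v ∧ letterW v (Fin.last n) < 0
              then (X:ℝ[X]) ^ (if nDes v (q : ℕ) then desB v else desB v + 1) else 0) := by
        intro q
        have hq : ((q.castSucc : Fin (n + 2)) : ℕ) = (q : ℕ) := rfl
        rw [Fintype.sum_bool]
        rw [dif_pos (by rw [hq]; exact q.isLt), dif_pos (by rw [hq]; exact q.isLt), hq]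
        ring
      rw [Finset.sum_congr rfl (fun q _ => e2 q), ← Finset.mul_sum]
      by_cases hv : IsSP v ∧ letterW v (Fin.last n) < 0
      · rw [if_pos hv, Finset.sum_congr rfl (fun q _ => by rw [if_pos hv]), sq_eq]
      · rw [if_neg hv, Finset.sum_congr rfl (fun q _ => by rw [if_neg hv])]
        simp
  rw [Finset.sum_congr rfl (fun v _ => e1 v), Finset.sum_add_distrib]
  congr 1
  · rw [Bpoly, Finset.mul_sum, Finset.sum_filter]
    refine Finset.sum_congr rfl fun v _ => ?_
    by_cases h : IsSP v <;> simp [h, pow_succ, mul_comm]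
  · have e3 : Bminus (n + 1) = ∑ u ∈ univ.filter (fun u : Fin (n + 1) → Fin (n + 1) × Bool =>
        IsSP u ∧ letterW u (Fin.last n) < 0), X ^ desB u := rfl
    rw [e3, Finset.mul_sum, derivative_sum, Finset.mul_sum, Finset.mul_sum,
      ← Finset.sum_add_distrib, Finset.mul_sum, ← Finset.sum_filter]
    refine Finset.sum_congr rfl fun v _ => ?_
    rw [mono_op]

lemma Bpoly_split (n : ℕ) : Bpoly (n + 1) = Bplus (n + 1) + Bminus (n + 1) := by
  classical
  have e1 : Bplus (n + 1) = ∑ u ∈ univ.filter (fun u : Fin (n + 1) → Fin (n + 1) × Bool =>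
      IsSP u ∧ 0 < letterW u (Fin.last n)), X ^ desB u := rfl
  have e2 : Bminus (n + 1) = ∑ u ∈ univ.filter (fun u : Fin (n + 1) → Fin (n + 1) × Bool =>
      IsSP u ∧ letterW u (Fin.last n) < 0), X ^ desB u := rfl
  rw [Bpoly, e1, e2,
    ← Finset.sum_filter_add_sum_filter_not
      (univ.filter (fun u : Fin (n + 1) → Fin (n + 1) × Bool => IsSP u))
      (fun u => 0 < letterW u (Fin.last n))]
  congr 1
  · rw [Finset.filter_filter]
  · rw [Finset.filter_filter]
    refine Finset.sum_congr (Finset.filter_congr fun u _ => ?_) (fun _ _ => rfl)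
    have h := letter_ne_zero u (Fin.last n)
    constructor
    · rintro ⟨h1, h2⟩
      exact ⟨h1, by omega⟩
    · rintro ⟨h1, h2⟩
      exact ⟨h1, by omega⟩

noncomputable def Phi (n : ℕ) : PowerSeries ℝ :=
  PowerSeries.mk fun i => ((2 * i + 1 : ℕ) : ℝ) ^ n - ((2 * i : ℕ) : ℝ) ^ n

noncomputable def Psi (n : ℕ) : PowerSeries ℝ :=
  PowerSeries.mk fun i => ((2 * i : ℕ) : ℝ) ^ n - ((2 * i - 1 : ℕ) : ℝ) ^ n

lemma phi_rec (n : ℕ) :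
    (1 - PowerSeries.X) * Phi (n + 2)
      = Phi (n + 1) + Psi (n + 1)
        + 2 * (PowerSeries.X * (1 - PowerSeries.X)
            * (PowerSeries.derivative ℝ (Phi (n + 1)))) := by
  set d := PowerSeries.derivative ℝ (Phi (n + 1)) with hdd
  have e : (1 - PowerSeries.X) * Phi (n + 2)
      = Phi (n + 2) - PowerSeries.X * Phi (n + 2) := by ring
  have e2 : Phi (n + 1) + Psi (n + 1) + 2 * (PowerSeries.X * (1 - PowerSeries.X) * d)
      = Phi (n + 1) + Psi (n + 1) + ((PowerSeries.X * d + PowerSeries.X * d)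
          - (PowerSeries.X * (PowerSeries.X * d) + PowerSeries.X * (PowerSeries.X * d))) := by
    ring
  rw [e, e2]
  refine PowerSeries.ext fun k => ?_
  simp only [map_sub, map_add]
  cases k with
  | zero =>
    simp only [PowerSeries.coeff_zero_X_mul, Phi, Psi, PowerSeries.coeff_mk]
    push_cast
    simp [zero_pow]
  | succ j =>
    simp only [PowerSeries.coeff_succ_X_mul, Phi, Psi, PowerSeries.coeff_mk, hdd,
      PowerSeries.coeff_derivative]
    cases j with
    | zero =>
      simp only [PowerSeries.coeff_zero_X_mul, PowerSeries.coeff_mk]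
      push_cast
      simp only [zero_pow (show n + 2 ≠ 0 by omega), zero_pow (show n + 1 ≠ 0 by omega),
        one_pow]
      ring
    | succ i =>
      simp only [PowerSeries.coeff_succ_X_mul, PowerSeries.coeff_derivative,
        PowerSeries.coeff_mk]
      have h1 : 2 * (i + 2) - 1 = 2 * i + 3 := by omega
      have h2 : 2 * (i + 1) - 1 = 2 * i + 1 := by omega
      rw [h1]
      push_cast
      ring

lemma psi_rec (n : ℕ) :
    (1 - PowerSeries.X) * Psi (n + 2)
      = PowerSeries.X * Phi (n + 1) + PowerSeries.X * Psi (n + 1)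
        + 2 * (PowerSeries.X * (1 - PowerSeries.X)
            * (PowerSeries.derivative ℝ (Psi (n + 1)))) := by
  set d := PowerSeries.derivative ℝ (Psi (n + 1)) with hdd
  have e : (1 - PowerSeries.X) * Psi (n + 2)
      = Psi (n + 2) - PowerSeries.X * Psi (n + 2) := by ring
  have e2 : PowerSeries.X * Phi (n + 1) + PowerSeries.X * Psi (n + 1)
        + 2 * (PowerSeries.X * (1 - PowerSeries.X) * d)
      = PowerSeries.X * Phi (n + 1) + PowerSeries.X * Psi (n + 1)
        + ((PowerSeries.X * d + PowerSeries.X * d)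
          - (PowerSeries.X * (PowerSeries.X * d) + PowerSeries.X * (PowerSeries.X * d))) := by
    ring
  rw [e, e2]
  refine PowerSeries.ext fun k => ?_
  simp only [map_sub, map_add]
  cases k with
  | zero =>
    simp only [PowerSeries.coeff_zero_X_mul, Psi, PowerSeries.coeff_mk]
    push_cast
    simp [zero_pow]
  | succ j =>
    simp only [PowerSeries.coeff_succ_X_mul, Phi, Psi, PowerSeries.coeff_mk, hdd,
      PowerSeries.coeff_derivative]
    cases j with
    | zero =>
      simp only [PowerSeries.coeff_zero_X_mul, PowerSeries.coeff_mk]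
      push_cast
      simp only [zero_pow (show n + 2 ≠ 0 by omega), zero_pow (show n + 1 ≠ 0 by omega),
        one_pow]
      ring
    | succ i =>
      simp only [PowerSeries.coeff_succ_X_mul, PowerSeries.coeff_derivative,
        PowerSeries.coeff_mk]
      have h1 : 2 * (i + 2) - 1 = 2 * i + 3 := by omega
      have h2 : 2 * (i + 1) - 1 = 2 * i + 1 := by omega
      rw [h1, h2]
      push_cast
      ring

lemma coe_natCast' (n : ℕ) : (((n : ℝ[X])) : PowerSeries ℝ) = (n : PowerSeries ℝ) := by
  rw [← Polynomial.coeToPowerSeries.ringHom_apply, map_natCast]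

lemma coe_two : ((2 : ℝ[X]) : PowerSeries ℝ) = 2 := by
  rw [← Polynomial.coeToPowerSeries.ringHom_apply, map_ofNat]

lemma Bplus_one : Bplus 1 = 1 := by
  have h : (univ.filter (fun u : Fin 1 → Fin 1 × Bool =>
      IsSP u ∧ 0 < letterW u (Fin.last 0))) = {fun _ => (0, true)} := by decide
  have e : Bplus 1 = ∑ u ∈ univ.filter (fun u : Fin 1 → Fin 1 × Bool =>
      IsSP u ∧ 0 < letterW u (Fin.last 0)), X ^ desB u := rfl
  rw [e, h, Finset.sum_singleton,
    show desB (fun _ : Fin 1 => ((0 : Fin 1), true)) = 0 from by decide, pow_zero]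

lemma Bminus_one : Bminus 1 = X := by
  have h : (univ.filter (fun u : Fin 1 → Fin 1 × Bool =>
      IsSP u ∧ letterW u (Fin.last 0) < 0)) = {fun _ => (0, false)} := by decide
  have e : Bminus 1 = ∑ u ∈ univ.filter (fun u : Fin 1 → Fin 1 × Bool =>
      IsSP u ∧ letterW u (Fin.last 0) < 0), X ^ desB u := rfl
  rw [e, h, Finset.sum_singleton,
    show desB (fun _ : Fin 1 => ((0 : Fin 1), false)) = 1 from by decide, pow_one]

lemma base_plus : ((Bplus 1 : ℝ[X]) : PowerSeries ℝ) = (1 - PowerSeries.X) ^ 1 * Phi 1 := by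
  rw [Bplus_one, Polynomial.coe_one, pow_one]
  refine PowerSeries.ext fun k => ?_
  have e : (1 - PowerSeries.X) * Phi 1 = Phi 1 - PowerSeries.X * Phi 1 := by ring
  rw [e, map_sub]
  cases k with
  | zero =>
    simp [Phi, PowerSeries.coeff_zero_X_mul, PowerSeries.coeff_mk]
  | succ j =>
    simp [Phi, PowerSeries.coeff_succ_X_mul, PowerSeries.coeff_mk, PowerSeries.coeff_one]

lemma base_minus : ((Bminus 1 : ℝ[X]) : PowerSeries ℝ) = (1 - PowerSeries.X) ^ 1 * Psi 1 := by
  rw [Bminus_one, Polynomial.coe_X, pow_one]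
  refine PowerSeries.ext fun k => ?_
  have e : (1 - PowerSeries.X) * Psi 1 = Psi 1 - PowerSeries.X * Psi 1 := by ring
  rw [e, map_sub]
  cases k with
  | zero =>
    simp [Psi, PowerSeries.coeff_zero_X_mul, PowerSeries.coeff_mk, PowerSeries.coeff_zero_X]
  | succ j =>
    cases j with
    | zero =>
      simp [Psi, PowerSeries.coeff_succ_X_mul, PowerSeries.coeff_mk, PowerSeries.coeff_X]
      norm_num
    | succ i =>
      simp only [Psi, PowerSeries.coeff_succ_X_mul, PowerSeries.coeff_mk, PowerSeries.coeff_X]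
      have h1 : 2 * (i + 2) - 1 = 2 * i + 3 := by omega
      have h2 : 2 * (i + 1) - 1 = 2 * i + 1 := by omega
      rw [h1, h2]
      push_cast
      ring

lemma deriv_one_sub_pow (k : ℕ) :
    PowerSeries.derivative ℝ ((1 - PowerSeries.X) ^ (k + 1))
      = -((k : PowerSeries ℝ) + 1) * (1 - PowerSeries.X) ^ k := by
  rw [Derivation.leibniz_pow]
  have h1 : PowerSeries.derivative ℝ (1 - PowerSeries.X) = -1 := by
    rw [map_sub, PowerSeries.derivative_X, Derivation.map_one_eq_zero]
    ring
  rw [h1, Nat.add_sub_cancel]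
  rw [smul_eq_mul]
  push_cast
  ring

lemma main_ind (n : ℕ) :
    ((Bplus (n + 1) : ℝ[X]) : PowerSeries ℝ) = (1 - PowerSeries.X) ^ (n + 1) * Phi (n + 1)
      ∧ ((Bminus (n + 1) : ℝ[X]) : PowerSeries ℝ)
          = (1 - PowerSeries.X) ^ (n + 1) * Psi (n + 1) := by
  induction n with
  | zero => exact ⟨base_plus, base_minus⟩
  | succ m ih =>
    obtain ⟨ihp, ihm⟩ := ih
    have hpoly : ((Bpoly (m + 1) : ℝ[X]) : PowerSeries ℝ)
        = (1 - PowerSeries.X) ^ (m + 1) * (Phi (m + 1) + Psi (m + 1)) := by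
      rw [Bpoly_split, Polynomial.coe_add, ihp, ihm]
      ring
    have hDp : ((Polynomial.derivative (Bplus (m + 1)) : ℝ[X]) : PowerSeries ℝ)
        = PowerSeries.derivative ℝ ((1 - PowerSeries.X) ^ (m + 1) * Phi (m + 1)) := by
      rw [← ihp, PowerSeries.derivative_coe]
    have hDm : ((Polynomial.derivative (Bminus (m + 1)) : ℝ[X]) : PowerSeries ℝ)
        = PowerSeries.derivative ℝ ((1 - PowerSeries.X) ^ (m + 1) * Psi (m + 1)) := by
      rw [← ihm, PowerSeries.derivative_coe]
    have hleibp : PowerSeries.derivative ℝ ((1 - PowerSeries.X) ^ (m + 1) * Phi (m + 1))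
        = (1 - PowerSeries.X) ^ (m + 1) * PowerSeries.derivative ℝ (Phi (m + 1))
          + Phi (m + 1) * (-((m : PowerSeries ℝ) + 1) * (1 - PowerSeries.X) ^ m) := by
      rw [Derivation.leibniz, deriv_one_sub_pow, smul_eq_mul, smul_eq_mul]
    have hleibm : PowerSeries.derivative ℝ ((1 - PowerSeries.X) ^ (m + 1) * Psi (m + 1))
        = (1 - PowerSeries.X) ^ (m + 1) * PowerSeries.derivative ℝ (Psi (m + 1))
          + Psi (m + 1) * (-((m : PowerSeries ℝ) + 1) * (1 - PowerSeries.X) ^ m) := by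
      rw [Derivation.leibniz, deriv_one_sub_pow, smul_eq_mul, smul_eq_mul]
    constructor
    · rw [Bplus_rec m]
      push_cast [Polynomial.coe_add, Polynomial.coe_mul, Polynomial.coe_one, Polynomial.coe_X,
        coe_natCast', coe_two]
      rw [hpoly, hDp, hleibp, ihp]
      have hphi := phi_rec m
      have key : (1 - PowerSeries.X) ^ (m + 2) * Phi (m + 2)
          = (1 - PowerSeries.X) ^ (m + 1) * ((1 - PowerSeries.X) * Phi (m + 2)) := by ring
      rw [key, hphi]
      ring
    · rw [Bminus_rec m]
      push_cast [Polynomial.coe_add, Polynomial.coe_mul, Polynomial.coe_one, Polynomial.coe_X,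
        coe_natCast', coe_two]
      rw [hpoly, hDm, hleibm, ihm]
      have hpsi := psi_rec m
      have key : (1 - PowerSeries.X) ^ (m + 2) * Psi (m + 2)
          = (1 - PowerSeries.X) ^ (m + 1) * ((1 - PowerSeries.X) * Psi (m + 2)) := by ring
      rw [key, hpsi]
      ring

end BAux

/-- For `n ≥ 1`, in `ℝ⟦x⟧`:
`B_n^+(x) = (1−x)^n · Σ_{i≥0} ((2i+1)^n − (2i)^n) x^i`. -/
theorem Bplus_power_series_expansion (n : ℕ) (hn : 1 ≤ n) :
    (PowerSeries.mk fun k => (Bplus n).coeff k)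
      = (1 - PowerSeries.X) ^ n *
          PowerSeries.mk (fun i => (((2 * i + 1 : ℕ) : ℝ) ^ n - ((2 * i : ℕ) : ℝ) ^ n)) := by
  obtain ⟨m, rfl⟩ : ∃ m, n = m + 1 := ⟨n - 1, by omega⟩
  have h1 : (PowerSeries.mk fun k => (Bplus (m + 1)).coeff k)
      = ((Bplus (m + 1) : ℝ[X]) : PowerSeries ℝ) := by
    refine PowerSeries.ext fun k => ?_
    rw [PowerSeries.coeff_mk, Polynomial.coeff_coe]
  rw [h1, (BAux.main_ind m).1]
  rfl
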